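/- For the four-element poset J on {a, b, c, d} with relations a < b < c and a < d (with d incomparable to b and c), c(J) = 4 and c*(J) = 5. -/

import Mathlib

/-- A weak embedding of a poset `P` into the Boolean lattice `B_n`:
an injective map such that `a < b` implies `f a ⊊ f b`. -/
def IsWeakEmbedding {P : Type*} [PartialOrder P] {n : ℕ} (f : P → Finset (Fin n)) : Prop :=
  Function.Injective f ∧ ∀ a b : P, a < b → f a ⊂ f b

/-- A strong embedding of a poset `P` into the Boolean lattice `B_n`:
an injective map such that `a < b` iff `f a ⊊ f b`. -/
def IsStrongEmbedding {P : Type*} [PartialOrder P] {n : ℕ} (f : P → Finset (Fin n)) : Prop :=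
  Function.Injective f ∧ ∀ a b : P, a < b ↔ f a ⊂ f b

/-- The convex closure of a family `F` of subsets of `[n]`:
all `S` with `A ⊆ S ⊆ B` for some `A, B ∈ F`. -/
def convexClosure {n : ℕ} (F : Finset (Finset (Fin n))) : Finset (Finset (Fin n)) :=
  Finset.univ.filter (fun S => ∃ A ∈ F, ∃ B ∈ F, A ⊆ S ∧ S ⊆ B)

/-- `c(P)`: the minimum size of the convex closure of the image of a weak embedding
of `P` into a Boolean lattice `B_k`, over all `k` and all weak embeddings. -/
noncomputable def closureNum (P : Type*) [PartialOrder P] [Fintype P] : ℕ :=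
  sInf {m | ∃ (k : ℕ) (f : P → Finset (Fin k)), IsWeakEmbedding f ∧
    (convexClosure (Finset.image f Finset.univ)).card = m}

/-- `c*(P)`: the minimum size of the convex closure of the image of a strong embedding
of `P` into a Boolean lattice `B_k`, over all `k` and all strong embeddings. -/
noncomputable def closureNumStar (P : Type*) [PartialOrder P] [Fintype P] : ℕ :=
  sInf {m | ∃ (k : ℕ) (f : P → Finset (Fin k)), IsStrongEmbedding f ∧
    (convexClosure (Finset.image f Finset.univ)).card = m}

/-- The four-element poset `J`, with `a < b < c`, `a < d`, and `d` incomparable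
to both `b` and `c`. -/
inductive JT : Type
  | a | b | c | d
  deriving DecidableEq

instance : Fintype JT where
  elems := {JT.a, JT.b, JT.c, JT.d}
  complete := by
    intro x
    cases x <;> first | decide | simp

instance : PartialOrder JT where
  le x y := x = y ∨ x = JT.a ∨ (x = JT.b ∧ y = JT.c)
  le_refl x := Or.inl rfl
  le_trans := by
    intro x y z hxy hyz
    rcases hxy with rfl | h | ⟨hb, hc⟩
    · exact hyz
    · exact Or.inr (Or.inl h)
    · subst hb; subst hc
      rcases hyz with rfl | h | ⟨h1, h2⟩
      · exact Or.inr (Or.inr ⟨rfl, rfl⟩)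
      · exact absurd h (by decide)
      · exact absurd h1 (by decide)
  le_antisymm := by
    intro x y hxy hyx
    rcases hxy with rfl | h | ⟨h1, h2⟩
    · rfl
    · subst h
      rcases hyx with h' | h' | ⟨h1', h2'⟩
      · exact h'.symm
      · exact h'.symm
      · exact absurd h2' (by decide)
    · subst h1; subst h2
      rcases hyx with h' | h' | ⟨h1', h2'⟩
      · exact h'.symm
      · exact absurd h' (by decide)
      · exact absurd h1' (by decide)

instance : DecidableRel (α := JT) (· ≤ ·) := fun x y =>
  decidable_of_iff (x = y ∨ x = JT.a ∨ (x = JT.b ∧ y = JT.c)) Iff.rfl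

instance : DecidableRel (α := JT) (· < ·) := fun x y =>
  decidable_of_iff (x ≤ y ∧ ¬ y ≤ x) lt_iff_le_not_ge.symm

def fweak : JT → Finset (Fin 2)
  | JT.a => ∅
  | JT.b => {0}
  | JT.c => {0, 1}
  | JT.d => {1}

def fstrong : JT → Finset (Fin 3)
  | JT.a => ∅
  | JT.b => {0}
  | JT.c => {0, 1}
  | JT.d => {2}

lemma memC {n : ℕ} {F : Finset (Finset (Fin n))} {S : Finset (Fin n)} (hS : S ∈ F) :
    S ∈ convexClosure F := by
  simp only [convexClosure, Finset.mem_filter, Finset.mem_univ, true_and]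
  exact ⟨S, hS, S, hS, subset_rfl, subset_rfl⟩

lemma weak_lower {k : ℕ} (f : JT → Finset (Fin k)) (hf : Function.Injective f) :
    4 ≤ (convexClosure (Finset.image f Finset.univ)).card := by
  have h1 : (Finset.image f Finset.univ).card = 4 := by
    rw [Finset.card_image_of_injective _ hf]; decide
  calc 4 = (Finset.image f Finset.univ).card := h1.symm
    _ ≤ _ := Finset.card_le_card (fun S hS => memC hS)

lemma strong_lower {k : ℕ} (f : JT → Finset (Fin k)) (hf : IsStrongEmbedding f) :
    5 ≤ (convexClosure (Finset.image f Finset.univ)).card := by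
  obtain ⟨hinj, hord⟩ := hf
  set F := Finset.image f Finset.univ with hF
  have memF : ∀ x : JT, f x ∈ F := fun x => Finset.mem_image_of_mem f (Finset.mem_univ x)
  have hne : ∀ u v : JT, u ≠ v → f u ≠ f v := fun u v h hh => h (hinj hh)
  have hab : f JT.a ⊂ f JT.b := (hord _ _).mp (by decide)
  have hbc : f JT.b ⊂ f JT.c := (hord _ _).mp (by decide)
  have hac : f JT.a ⊂ f JT.c := (hord _ _).mp (by decide)
  have hndc : ¬ f JT.d ⊂ f JT.c := fun h => absurd ((hord _ _).mpr h) (by decide)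
  have hcard : (f JT.a).card + 2 ≤ (f JT.c).card := by
    have h1 := Finset.card_lt_card hab
    have h2 := Finset.card_lt_card hbc
    omega
  have hsub : f JT.a ⊆ f JT.c := hac.subset
  have h2 : 1 < ((f JT.c) \ (f JT.a)).card := by
    rw [Finset.card_sdiff_of_subset hsub]; omega
  obtain ⟨x, hx, y, hy, hxy⟩ := Finset.one_lt_card.mp h2
  simp only [Finset.mem_sdiff] at hx hy
  have key : ∀ z, z ∈ f JT.c → z ∉ f JT.a →
      insert z (f JT.a) ∈ convexClosure F ∧ insert z (f JT.a) ≠ f JT.a ∧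
      insert z (f JT.a) ≠ f JT.c ∧ insert z (f JT.a) ≠ f JT.d := by
    intro z hzc hza
    have hcins : (insert z (f JT.a)).card = (f JT.a).card + 1 :=
      Finset.card_insert_of_notMem hza
    have hsubS : insert z (f JT.a) ⊆ f JT.c := Finset.insert_subset hzc hsub
    refine ⟨?_, ?_, ?_, ?_⟩
    · simp only [convexClosure, Finset.mem_filter, Finset.mem_univ, true_and]
      exact ⟨f JT.a, memF _, f JT.c, memF _, Finset.subset_insert _ _, hsubS⟩
    · intro h; exact hza (h ▸ Finset.mem_insert_self z _)
    · intro h; rw [h] at hcins; omega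
    · intro h
      apply hndc
      refine ⟨h ▸ hsubS, fun hcd => ?_⟩
      have : (f JT.d).card = (f JT.a).card + 1 := by rw [← h]; exact hcins
      have := Finset.card_le_card hcd
      omega
  obtain ⟨S, hSmem, hSa, hSc, hSd, hSb⟩ :
      ∃ S, S ∈ convexClosure F ∧ S ≠ f JT.a ∧ S ≠ f JT.c ∧ S ≠ f JT.d ∧ S ≠ f JT.b := by
    have hS12 : insert x (f JT.a) ≠ insert y (f JT.a) := by
      intro h
      have hxm : x ∈ insert y (f JT.a) := h ▸ Finset.mem_insert_self x _
      rcases Finset.mem_insert.mp hxm with h' | h'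
      · exact hxy h'
      · exact hx.2 h'
    by_cases hb : insert x (f JT.a) = f JT.b
    · obtain ⟨k1, k2, k3, k4⟩ := key y hy.1 hy.2
      exact ⟨_, k1, k2, k3, k4, by rw [← hb]; exact fun h => hS12 h.symm⟩
    · obtain ⟨k1, k2, k3, k4⟩ := key x hx.1 hx.2
      exact ⟨_, k1, k2, k3, k4, hb⟩
  have n4 : f JT.d ∉ ({S} : Finset (Finset (Fin k))) := by
    simp only [Finset.mem_singleton]; exact fun h => hSd h.symm
  have n3 : f JT.c ∉ ({f JT.d, S} : Finset (Finset (Fin k))) := by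
    simp only [Finset.mem_insert, Finset.mem_singleton]
    push_neg
    exact ⟨hne _ _ (by decide), fun h => hSc h.symm⟩
  have n2 : f JT.b ∉ ({f JT.c, f JT.d, S} : Finset (Finset (Fin k))) := by
    simp only [Finset.mem_insert, Finset.mem_singleton]
    push_neg
    exact ⟨hne _ _ (by decide), hne _ _ (by decide), fun h => hSb h.symm⟩
  have n1 : f JT.a ∉ ({f JT.b, f JT.c, f JT.d, S} : Finset (Finset (Fin k))) := by
    simp only [Finset.mem_insert, Finset.mem_singleton]
    push_neg
    exact ⟨hne _ _ (by decide), hne _ _ (by decide), hne _ _ (by decide), fun h => hSa h.symm⟩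
  have hcard5 : ({f JT.a, f JT.b, f JT.c, f JT.d, S} : Finset (Finset (Fin k))).card = 5 := by
    rw [Finset.card_insert_of_notMem n1, Finset.card_insert_of_notMem n2,
      Finset.card_insert_of_notMem n3, Finset.card_insert_of_notMem n4,
      Finset.card_singleton]
  have hsub5 : ({f JT.a, f JT.b, f JT.c, f JT.d, S} : Finset (Finset (Fin k))) ⊆
      convexClosure F := by
    intro t ht
    simp only [Finset.mem_insert, Finset.mem_singleton] at ht
    rcases ht with rfl | rfl | rfl | rfl | rfl
    · exact memC (memF _)
    · exact memC (memF _)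
    · exact memC (memF _)
    · exact memC (memF _)
    · exact hSmem
  calc 5 = _ := hcard5.symm
    _ ≤ _ := Finset.card_le_card hsub5

/-- For the four-element poset `J` (with `a < b < c` and `a < d`,
`d` incomparable to `b` and `c`), `c(J) = 4` and `c*(J) = 5`. -/
theorem closureNum_J : closureNum JT = 4 ∧ closureNumStar JT = 5 := by
  constructor
  · unfold closureNum
    have hmem : 4 ∈ {m | ∃ (k : ℕ) (f : JT → Finset (Fin k)), IsWeakEmbedding f ∧
        (convexClosure (Finset.image f Finset.univ)).card = m} :=
      ⟨2, fweak, by unfold IsWeakEmbedding; decide, by decide⟩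
    refine le_antisymm (Nat.sInf_le hmem) ?_
    obtain ⟨k, f, hw, hc⟩ := Nat.sInf_mem (⟨4, hmem⟩ : Set.Nonempty _)
    rw [← hc]
    exact weak_lower f hw.1
  · unfold closureNumStar
    have hmem : 5 ∈ {m | ∃ (k : ℕ) (f : JT → Finset (Fin k)), IsStrongEmbedding f ∧
        (convexClosure (Finset.image f Finset.univ)).card = m} :=
      ⟨3, fstrong, by unfold IsStrongEmbedding; decide, by decide⟩
    refine le_antisymm (Nat.sInf_le hmem) ?_
    obtain ⟨k, f, hs, hc⟩ := Nat.sInf_mem (⟨5, hmem⟩ : Set.Nonempty _)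
    rw [← hc]
    exact strong_lower f hs
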